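/- Lagrange duality with two-sided (L∞) constraints (Lemma A.4): for any a ∈ ℝⁿ, sup over z ∈ Z_ε of (1/n)·zᵀa equals inf over σ ∈ ℝᵖ of [−bᵀσ + (1/n)·‖Fᵀσ + a‖₁ + ε·‖σ‖₁], and both the supremum and the infimum are attained. -/

import Mathlib

open scoped BigOperators

def ZeSet (p n : ℕ) (F : Fin p → Fin n → ℝ) (b : Fin p → ℝ) (ε : ℝ) : Set (Fin n → ℝ) :=
  {z | (∀ j, z j ∈ Set.Icc (-1:ℝ) 1) ∧ ∀ i, |(1 / (n : ℝ)) * (∑ j, F i j * z j) - b i| ≤ ε}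

open Finset

lemma onedim_flat {ι : Type} (S : Finset ι) (hS : S.Nonempty) (α β : ι → ℝ) (m : ℝ)
    (hα : ∀ s ∈ S, α s ≤ 0)
    (hm : ∀ t : ℝ, m ≤ S.sup' hS fun s => α s * t + β s) :
    ∃ t0 : ℝ, ∀ t : ℝ,
      (S.sup' hS fun s => α s * t0 + β s) ≤ S.sup' hS fun s => α s * t + β s := by
  classical
  by_cases hZ : (S.filter (fun s => α s = 0)).Nonempty
  · obtain ⟨z0, hz0mem, hz0⟩ := Finset.exists_mem_eq_sup' hZ β
    have hz0S : z0 ∈ S := Finset.mem_of_mem_filter z0 hz0mem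
    have hz0α : α z0 = 0 := (Finset.mem_filter.1 hz0mem).2
    set c0 := β z0 with hc0
    set T := S.sup' hS (fun s => if α s = 0 then 0 else (c0 - β s) / α s) with hT
    refine ⟨T, fun t => ?_⟩
    have h1 : (S.sup' hS fun s => α s * T + β s) ≤ c0 := by
      apply Finset.sup'_le
      intro s hs
      by_cases h0 : α s = 0
      · rw [h0, zero_mul, zero_add]
        have : β s ≤ (S.filter (fun s => α s = 0)).sup' hZ β :=
          Finset.le_sup' β (Finset.mem_filter.2 ⟨hs, h0⟩)
        rw [hz0] at this
        exact this
      · have hneg : α s < 0 := lt_of_le_of_ne (hα s hs) h0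
        have hTs : (if α s = 0 then 0 else (c0 - β s) / α s) ≤ T :=
          Finset.le_sup' (fun s => if α s = 0 then 0 else (c0 - β s) / α s) hs
        rw [if_neg h0] at hTs
        have h2 : α s * T ≤ α s * ((c0 - β s) / α s) :=
          mul_le_mul_of_nonpos_left hTs (le_of_lt hneg)
        have h3 : α s * ((c0 - β s) / α s) = c0 - β s :=
          mul_div_cancel₀ _ h0
        linarith
    have h2 : c0 ≤ S.sup' hS fun s => α s * t + β s := by
      have := Finset.le_sup' (fun s => α s * t + β s) hz0S
      simp only [hz0α, zero_mul, zero_add] at this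
      exact this
    exact h1.trans h2
  · exfalso
    have hneg : ∀ s ∈ S, α s < 0 := by
      intro s hs
      rcases lt_or_eq_of_le (hα s hs) with h | h
      · exact h
      · exact absurd ⟨s, Finset.mem_filter.2 ⟨hs, h⟩⟩ hZ
    set t := S.sup' hS (fun s => (m - 1 - β s) / α s) with ht
    have hle : (S.sup' hS fun s => α s * t + β s) ≤ m - 1 := by
      apply Finset.sup'_le
      intro s hs
      have hts : (m - 1 - β s) / α s ≤ t := Finset.le_sup' (fun s => (m - 1 - β s) / α s) hs
      have h2 : α s * t ≤ α s * ((m - 1 - β s) / α s) :=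
        mul_le_mul_of_nonpos_left hts (le_of_lt (hneg s hs))
      have h3 : α s * ((m - 1 - β s) / α s) = m - 1 - β s :=
        mul_div_cancel₀ _ (ne_of_lt (hneg s hs))
      linarith
    linarith [hm t]

lemma onedim {ι : Type} (S : Finset ι) (hS : S.Nonempty) (α β : ι → ℝ) (m : ℝ)
    (hm : ∀ t : ℝ, m ≤ S.sup' hS fun s => α s * t + β s) :
    ∃ t0 : ℝ, ∀ t : ℝ,
      (S.sup' hS fun s => α s * t0 + β s) ≤ S.sup' hS fun s => α s * t + β s := by
  classical
  set f : ℝ → ℝ := fun t => S.sup' hS fun s => α s * t + β s with hf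
  by_cases hneg : ∀ s ∈ S, α s ≤ 0
  · exact onedim_flat S hS α β m hneg hm
  by_cases hpos : ∀ s ∈ S, 0 ≤ α s
  · -- reflect
    have key : ∀ t : ℝ, (S.sup' hS fun s => (-α s) * t + β s) = f (-t) := by
      intro t
      apply Finset.sup'_congr hS rfl
      intro s _
      ring
    have hm' : ∀ t : ℝ, m ≤ S.sup' hS fun s => (-α s) * t + β s := by
      intro t; rw [key]; exact hm (-t)
    obtain ⟨t0, ht0⟩ := onedim_flat S hS (fun s => -α s) β m
      (fun s hs => neg_nonpos.2 (hpos s hs)) hm'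
    refine ⟨-t0, fun t => ?_⟩
    have := ht0 (-t)
    rw [key, key] at this
    simpa only [neg_neg] using this
  · -- coercive case
    push_neg at hneg hpos
    obtain ⟨sp, hspS, hsp⟩ := hneg
    obtain ⟨sn, hsnS, hsn⟩ := hpos
    have hcont : Continuous f := by
      apply Continuous.finset_sup'_apply hS
      intro s _
      continuity
    set Tp := (f 0 - β sp) / α sp with hTp
    set Tn := (f 0 - β sn) / α sn with hTn
    set lo := min Tn 0 with hlo
    set hi := max Tp 0 with hhi
    have hlohi : lo ≤ hi := le_trans (min_le_right _ _) (le_max_right _ _)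
    obtain ⟨t0, ht0mem, ht0⟩ := isCompact_Icc.exists_isMinOn (Set.nonempty_Icc.2 hlohi)
      hcont.continuousOn (s := Set.Icc lo hi)
    refine ⟨t0, fun t => ?_⟩
    show f t0 ≤ f t
    by_cases htmem : t ∈ Set.Icc lo hi
    · exact ht0 htmem
    · have h0mem : (0:ℝ) ∈ Set.Icc lo hi :=
        ⟨min_le_right _ _, le_max_right _ _⟩
      have hf0 : f t0 ≤ f 0 := ht0 h0mem
      rcases lt_or_ge t lo with h | h
      · -- t < lo ≤ Tn
        have htn : t ≤ Tn := le_of_lt (lt_of_lt_of_le h (min_le_left _ _))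
        have : f 0 - β sn ≤ α sn * t := by
          have h2 : α sn * Tn ≤ α sn * t := mul_le_mul_of_nonpos_left htn (le_of_lt hsn)
          have h3 : α sn * Tn = f 0 - β sn := mul_div_cancel₀ _ (ne_of_lt hsn)
          linarith
        have h4 : α sn * t + β sn ≤ f t := Finset.le_sup' (fun s => α s * t + β s) hsnS
        linarith
      · have h' : hi < t := by
          simp only [Set.mem_Icc, not_and, not_le] at htmem
          exact htmem h
        have htp : Tp ≤ t := le_of_lt (lt_of_le_of_lt (le_max_left _ _) h')
        have : f 0 - β sp ≤ α sp * t := by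
          have h2 : α sp * Tp ≤ α sp * t := mul_le_mul_of_nonneg_left htp (le_of_lt hsp) |>.trans_eq rfl
          have h3 : α sp * Tp = f 0 - β sp := mul_div_cancel₀ _ (ne_of_gt hsp)
          linarith
        have h4 : α sp * t + β sp ≤ f t := Finset.le_sup' (fun s => α s * t + β s) hspS
        linarith

lemma attain_slope_le {ι : Type} (S : Finset ι) (hS : S.Nonempty) (α β : ι → ℝ) (t0 : ℝ)
    (hmin : ∀ t : ℝ, (S.sup' hS fun s => α s * t0 + β s) ≤ S.sup' hS fun s => α s * t + β s) :
    ∃ s ∈ S, α s * t0 + β s = (S.sup' hS fun s => α s * t0 + β s) ∧ α s ≤ 0 := by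
  classical
  set f : ℝ → ℝ := fun t => S.sup' hS fun s => α s * t + β s with hf
  by_contra hcon
  push_neg at hcon
  -- every attaining s has α s > 0
  set δ := S.inf' hS (fun s => if α s ≤ 0 then (f t0 - (α s * t0 + β s)) / (|α s| + 1) else 1)
    with hδ
  have hgap : ∀ s ∈ S, α s ≤ 0 → α s * t0 + β s < f t0 := by
    intro s hs hsle
    rcases lt_or_eq_of_le (Finset.le_sup' (fun s => α s * t0 + β s) hs) with h | h
    · exact h
    · exact absurd hsle (by simpa using (hcon s hs h))
  have hδpos : 0 < δ := by
    rw [hδ, Finset.lt_inf'_iff]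
    intro s hs
    by_cases h0 : α s ≤ 0
    · rw [if_pos h0]
      apply div_pos
      · linarith [hgap s hs h0]
      · positivity
    · rw [if_neg h0]; norm_num
  have hlt : f (t0 - δ) < f t0 := by
    rw [hf]
    rw [Finset.sup'_lt_iff]
    intro s hs
    by_cases h0 : α s ≤ 0
    · have hδle : δ ≤ (f t0 - (α s * t0 + β s)) / (|α s| + 1) := by
        have := Finset.inf'_le (fun s => if α s ≤ 0 then (f t0 - (α s * t0 + β s)) / (|α s| + 1) else 1) hs
        rw [if_pos h0] at this
        exact this.trans_eq' hδ
      have hgs := hgap s hs h0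
      have habs : |α s| = -α s := abs_of_nonpos h0
      have h1 : α s * (t0 - δ) + β s = (α s * t0 + β s) + (-α s) * δ := by ring
      have h2 : (-α s) * δ ≤ (-α s) * ((f t0 - (α s * t0 + β s)) / (|α s| + 1)) := by
        apply mul_le_mul_of_nonneg_left hδle (by linarith)
      have h3 : (-α s) * ((f t0 - (α s * t0 + β s)) / (|α s| + 1)) < f t0 - (α s * t0 + β s) := by
        rw [habs] at *
        rw [div_eq_inv_mul, ← mul_assoc]
        have hd : (0:ℝ) < -α s + 1 := by linarith [neg_nonneg.2 h0]
        have : (-α s) * (-α s + 1)⁻¹ < 1 := by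
          rw [mul_inv_lt_iff₀ hd]
          linarith
        nlinarith [hgs]
      linarith
    · push_neg at h0
      have h1 : α s * (t0 - δ) + β s < α s * t0 + β s := by nlinarith
      have h2 : α s * t0 + β s ≤ f t0 := Finset.le_sup' (fun s => α s * t0 + β s) hs
      linarith
  exact absurd (hmin (t0 - δ)) (not_le.2 hlt)

lemma attain_slope_ge {ι : Type} (S : Finset ι) (hS : S.Nonempty) (α β : ι → ℝ) (t0 : ℝ)
    (hmin : ∀ t : ℝ, (S.sup' hS fun s => α s * t0 + β s) ≤ S.sup' hS fun s => α s * t + β s) :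
    ∃ s ∈ S, α s * t0 + β s = (S.sup' hS fun s => α s * t0 + β s) ∧ 0 ≤ α s := by
  have key : ∀ t : ℝ, (S.sup' hS fun s => (-α s) * t + β s) = S.sup' hS fun s => α s * (-t) + β s := by
    intro t
    apply Finset.sup'_congr hS rfl
    intro s _
    ring
  have hmin' : ∀ t : ℝ, (S.sup' hS fun s => (-α s) * (-t0) + β s) ≤ S.sup' hS fun s => (-α s) * t + β s := by
    intro t
    rw [key, key]
    simpa using hmin (-t)
  obtain ⟨s, hsS, hseq, hsle⟩ := attain_slope_le S hS (fun s => -α s) β (-t0) hmin'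
  refine ⟨s, hsS, ?_, by linarith⟩
  rw [key] at hseq
  simpa using hseq

lemma polymin (P : ℕ) : ∀ {ι : Type} (S : Finset ι) (hS : S.Nonempty)
    (c : ι → Fin P → ℝ) (d : ι → ℝ) (m : ℝ),
    (∀ σ : Fin P → ℝ, m ≤ S.sup' hS fun s => (∑ i, c s i * σ i) + d s) →
    ∃ σ0 : Fin P → ℝ, ∀ σ : Fin P → ℝ,
      (S.sup' hS fun s => (∑ i, c s i * σ0 i) + d s) ≤
        S.sup' hS fun s => (∑ i, c s i * σ i) + d s := by
  induction P with
  | zero =>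
    intro ι S hS c d m hm
    refine ⟨fun _ => 0, fun σ => ?_⟩
    apply le_of_eq
    apply Finset.sup'_congr hS rfl
    intro s _
    simp
  | succ P ih =>
    intro ι S hS c d m hm
    classical
    set α : ι → ℝ := fun s => c s (Fin.last P) with hα
    set β : ι → (Fin P → ℝ) → ℝ := fun s σ' => (∑ i, c s i.castSucc * σ' i) + d s with hβ
    set f1 : (Fin P → ℝ) → ℝ → ℝ := fun σ' t => S.sup' hS fun s => α s * t + β s σ' with hf1
    have keyrw : ∀ (σ' : Fin P → ℝ) (t : ℝ),
        (S.sup' hS fun s => (∑ i, c s i * (Fin.snoc σ' t : Fin (P+1) → ℝ) i) + d s)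
          = f1 σ' t := by
      intro σ' t
      apply Finset.sup'_congr hS rfl
      intro s _
      rw [Fin.sum_univ_castSucc]
      simp only [Fin.snoc_castSucc, Fin.snoc_last, hα, hβ]
      ring
    set Zf := S.filter (fun s => α s = 0) with hZf
    set Pf := S.filter (fun s => 0 < α s) with hPf
    set Nf := S.filter (fun s => α s < 0) with hNf
    set G : Finset (ι × ι) := Zf.image (fun s => (s, s)) ∪ Pf ×ˢ Nf with hG
    set w : ι × ι → ℝ := fun q => if α q.1 = α q.2 then 1 else α q.2 / (α q.2 - α q.1) with hw
    set c' : ι × ι → Fin P → ℝ :=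
      fun q i => w q * c q.1 i.castSucc + (1 - w q) * c q.2 i.castSucc with hc'
    set d' : ι × ι → ℝ := fun q => w q * d q.1 + (1 - w q) * d q.2 with hd'
    have termEq : ∀ (q : ι × ι) (σ' : Fin P → ℝ),
        (∑ i, c' q i * σ' i) + d' q = w q * β q.1 σ' + (1 - w q) * β q.2 σ' := by
      intro q σ'
      simp only [hc', hd', hβ, add_mul]
      rw [Finset.sum_add_distrib]
      simp only [mul_assoc]
      rw [← Finset.mul_sum, ← Finset.mul_sum]
      ring
    have hGprop : ∀ q ∈ G, q.1 ∈ S ∧ q.2 ∈ S ∧ 0 ≤ w q ∧ w q ≤ 1 ∧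
        w q * α q.1 + (1 - w q) * α q.2 = 0 := by
      intro q hq
      rcases Finset.mem_union.1 hq with h | h
      · obtain ⟨s, hsZ, rfl⟩ := Finset.mem_image.1 h
        have hsS : s ∈ S := Finset.mem_of_mem_filter s hsZ
        have hs0 : α s = 0 := (Finset.mem_filter.1 hsZ).2
        have hws : w (s, s) = 1 := by simp [hw]
        refine ⟨hsS, hsS, by rw [hws]; norm_num, by rw [hws], ?_⟩
        simp [hws, hs0]
      · have h1 := (Finset.mem_product.1 h).1
        have h2 := (Finset.mem_product.1 h).2
        have hα1 : 0 < α q.1 := (Finset.mem_filter.1 h1).2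
        have hα2 : α q.2 < 0 := (Finset.mem_filter.1 h2).2
        have hne : α q.1 ≠ α q.2 := by linarith
        have hden : α q.2 - α q.1 < 0 := by linarith
        have hws : w q = α q.2 / (α q.2 - α q.1) := by simp [hw, hne]
        refine ⟨Finset.mem_of_mem_filter _ h1, Finset.mem_of_mem_filter _ h2, ?_, ?_, ?_⟩
        · rw [hws]
          exact le_of_lt (div_pos_of_neg_of_neg hα2 hden)
        · rw [hws, div_le_one_of_neg hden]
          linarith
        · have hne2 : α q.2 - α q.1 ≠ 0 := ne_of_lt hden
          rw [hws]
          field_simp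
          ring
    -- step: for every σ', the 1-d min is dominated by a G-term
    have step : ∀ σ' : Fin P → ℝ, ∃ t : ℝ, ∃ q ∈ G,
        f1 σ' t ≤ (∑ i, c' q i * σ' i) + d' q ∧ ∀ t' : ℝ, f1 σ' t ≤ f1 σ' t' := by
      intro σ'
      have hmσ : ∀ t : ℝ, m ≤ S.sup' hS fun s => α s * t + β s σ' := by
        intro t
        have := hm (Fin.snoc σ' t)
        rwa [keyrw σ' t] at this
      obtain ⟨t0, ht0⟩ := onedim S hS α (fun s => β s σ') m hmσ
      obtain ⟨sm, hsmS, hsmEq, hsmLe⟩ := attain_slope_le S hS α (fun s => β s σ') t0 ht0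
      obtain ⟨sp, hspS, hspEq, hspGe⟩ := attain_slope_ge S hS α (fun s => β s σ') t0 ht0
      by_cases hm0 : α sm = 0
      · refine ⟨t0, (sm, sm), ?_, ?_, ht0⟩
        · apply Finset.mem_union_left
          exact Finset.mem_image.2 ⟨sm, Finset.mem_filter.2 ⟨hsmS, hm0⟩, rfl⟩
        · rw [termEq]
          have hws : w (sm, sm) = 1 := by simp [hw]
          rw [hws]
          have h5 : f1 σ' t0 = α sm * t0 + β sm σ' := hsmEq.symm
          rw [h5, hm0]
          exact le_of_eq (by ring)
      by_cases hp0 : α sp = 0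
      · refine ⟨t0, (sp, sp), ?_, ?_, ht0⟩
        · apply Finset.mem_union_left
          exact Finset.mem_image.2 ⟨sp, Finset.mem_filter.2 ⟨hspS, hp0⟩, rfl⟩
        · rw [termEq]
          have hws : w (sp, sp) = 1 := by simp [hw]
          rw [hws]
          have h5 : f1 σ' t0 = α sp * t0 + β sp σ' := hspEq.symm
          rw [h5, hp0]
          exact le_of_eq (by ring)
      · have hαp : 0 < α sp := lt_of_le_of_ne hspGe (Ne.symm hp0)
        have hαm : α sm < 0 := lt_of_le_of_ne hsmLe hm0
        have hqG : (sp, sm) ∈ G := by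
          apply Finset.mem_union_right
          exact Finset.mem_product.2
            ⟨Finset.mem_filter.2 ⟨hspS, hαp⟩, Finset.mem_filter.2 ⟨hsmS, hαm⟩⟩
        obtain ⟨_, _, hw0, hw1, hcombo⟩ := hGprop (sp, sm) hqG
        have hcombo' : w (sp, sm) * α sp + (1 - w (sp, sm)) * α sm = 0 := hcombo
        refine ⟨t0, (sp, sm), hqG, ?_, ht0⟩
        rw [termEq]
        have expand : w (sp, sm) * (α sp * t0 + β sp σ') + (1 - w (sp, sm)) * (α sm * t0 + β sm σ')
            = w (sp, sm) * β sp σ' + (1 - w (sp, sm)) * β sm σ'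
              + (w (sp, sm) * α sp + (1 - w (sp, sm)) * α sm) * t0 := by ring
        rw [hcombo', zero_mul, add_zero] at expand
        have e1 : f1 σ' t0 = α sp * t0 + β sp σ' := hspEq.symm
        have e2 : f1 σ' t0 = α sm * t0 + β sm σ' := hsmEq.symm
        rw [← e1, ← e2] at expand
        have hfst : ((sp, sm) : ι × ι).1 = sp := rfl
        have hsnd : ((sp, sm) : ι × ι).2 = sm := rfl
        rw [hfst, hsnd]
        linarith [expand]
    obtain ⟨tz, qz, hqzG, _, _⟩ := step (fun _ => 0)
    have hGne : G.Nonempty := ⟨qz, hqzG⟩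
    set h : (Fin P → ℝ) → ℝ := fun σ' => G.sup' hGne (fun q => (∑ i, c' q i * σ' i) + d' q)
      with hh
    -- (i) : h σ' ≤ f1 σ' t
    have hi : ∀ (σ' : Fin P → ℝ) (t : ℝ), h σ' ≤ f1 σ' t := by
      intro σ' t
      apply Finset.sup'_le
      intro q hq
      obtain ⟨hq1, hq2, hw0, hw1, hcombo⟩ := hGprop q hq
      rw [termEq]
      have h1 : α q.1 * t + β q.1 σ' ≤ f1 σ' t :=
        Finset.le_sup' (fun s => α s * t + β s σ') hq1
      have h2 : α q.2 * t + β q.2 σ' ≤ f1 σ' t :=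
        Finset.le_sup' (fun s => α s * t + β s σ') hq2
      have e1 := mul_le_mul_of_nonneg_left h1 hw0
      have e2 := mul_le_mul_of_nonneg_left h2 (by linarith : (0:ℝ) ≤ 1 - w q)
      have expand : w q * (α q.1 * t + β q.1 σ') + (1 - w q) * (α q.2 * t + β q.2 σ')
          = w q * β q.1 σ' + (1 - w q) * β q.2 σ'
            + (w q * α q.1 + (1 - w q) * α q.2) * t := by ring
      rw [hcombo, zero_mul, add_zero] at expand
      nlinarith [e1, e2]
    have hmh : ∀ σ' : Fin P → ℝ, m ≤ h σ' := by
      intro σ'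
      obtain ⟨t, q, hqG, hle, _⟩ := step σ'
      have h1 : m ≤ f1 σ' t := by
        have := hm (Fin.snoc σ' t)
        rwa [keyrw σ' t] at this
      exact h1.trans (hle.trans (Finset.le_sup' (fun q => (∑ i, c' q i * σ' i) + d' q) hqG))

    obtain ⟨σ'0, hσ'0⟩ := ih G hGne c' d' m hmh
    obtain ⟨t0, q0, hq0G, hq0le, _⟩ := step σ'0
    refine ⟨Fin.snoc σ'0 t0, fun σ => ?_⟩
    rw [keyrw σ'0 t0]
    have c1 : f1 σ'0 t0 ≤ h σ'0 :=
      hq0le.trans (Finset.le_sup' (fun q => (∑ i, c' q i * σ'0 i) + d' q) hq0G)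
    have c2 : h σ'0 ≤ h (Fin.init σ) := hσ'0 (Fin.init σ)
    have c3 : h (Fin.init σ) ≤ f1 (Fin.init σ) (σ (Fin.last P)) := hi _ _
    have c4 : f1 (Fin.init σ) (σ (Fin.last P))
        = S.sup' hS fun s => (∑ i, c s i * σ i) + d s := by
      rw [← keyrw (Fin.init σ) (σ (Fin.last P))]
      apply Finset.sup'_congr hS rfl
      intro s _
      rw [Fin.snoc_init_self]
    linarith

noncomputable def sg (u : Bool) : ℝ := if u then 1 else -1

lemma sg_abs (u : Bool) : |sg u| = 1 := by cases u <;> simp [sg]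

lemma sg_mul_le (u : Bool) (x : ℝ) : sg u * x ≤ |x| := by
  cases u
  · simpa [sg] using neg_le_abs x
  · simpa [sg] using le_abs_self x

lemma sg_decide (x : ℝ) : sg (decide (0 ≤ x)) * x = |x| := by
  by_cases h : 0 ≤ x
  · simp [sg, h, abs_of_nonneg h]
  · simp [sg, h, abs_of_neg (lt_of_not_ge h)]

noncomputable def gExpr (p n : ℕ) (F : Fin p → Fin n → ℝ) (b : Fin p → ℝ) (a : Fin n → ℝ)
    (ε : ℝ) (σ : Fin p → ℝ) : ℝ :=
  -(∑ i, b i * σ i) + (1 / (n : ℝ)) * (∑ j, |(∑ i, σ i * F i j) + a j|) + ε * ∑ i, |σ i|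

noncomputable def cc (p n : ℕ) (F : Fin p → Fin n → ℝ) (b : Fin p → ℝ) (ε : ℝ)
    (q : (Fin n → Bool) × (Fin p → Bool)) (i : Fin p) : ℝ :=
  -b i + (1 / (n : ℝ)) * (∑ j, sg (q.1 j) * F i j) + ε * sg (q.2 i)

noncomputable def dd (p n : ℕ) (a : Fin n → ℝ) (q : (Fin n → Bool) × (Fin p → Bool)) : ℝ :=
  (1 / (n : ℝ)) * ∑ j, sg (q.1 j) * a j

lemma ellEq (p n : ℕ) (F : Fin p → Fin n → ℝ) (b : Fin p → ℝ) (a : Fin n → ℝ) (ε : ℝ)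
    (q : (Fin n → Bool) × (Fin p → Bool)) (σ : Fin p → ℝ) :
    (∑ i, cc p n F b ε q i * σ i) + dd p n a q
      = -(∑ i, b i * σ i)
        + (1 / (n : ℝ)) * (∑ j, sg (q.1 j) * ((∑ i, σ i * F i j) + a j))
        + ε * (∑ i, sg (q.2 i) * σ i) := by
  have expand : ∀ i, cc p n F b ε q i * σ i
      = -(b i * σ i) + (1 / (n : ℝ)) * (∑ j, sg (q.1 j) * (σ i * F i j))
        + ε * (sg (q.2 i) * σ i) := by
    intro i
    have h1 : (∑ j, sg (q.1 j) * (σ i * F i j)) = (∑ j, sg (q.1 j) * F i j) * σ i := by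
      rw [Finset.sum_mul]
      exact Finset.sum_congr rfl (fun j _ => by ring)
    rw [h1]
    simp only [cc]
    ring
  have e1 : (∑ i, cc p n F b ε q i * σ i)
      = ∑ i, (-(b i * σ i) + (1 / (n : ℝ)) * (∑ j, sg (q.1 j) * (σ i * F i j))
          + ε * (sg (q.2 i) * σ i)) :=
    Finset.sum_congr rfl (fun i _ => expand i)
  have e2 : ∑ i, (-(b i * σ i) + (1 / (n : ℝ)) * (∑ j, sg (q.1 j) * (σ i * F i j))
          + ε * (sg (q.2 i) * σ i))
      = (∑ i, -(b i * σ i)) + (∑ i, (1 / (n : ℝ)) * (∑ j, sg (q.1 j) * (σ i * F i j)))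
          + (∑ i, ε * (sg (q.2 i) * σ i)) := by
    rw [Finset.sum_add_distrib, Finset.sum_add_distrib]
  have e3 : (∑ i, (1 / (n : ℝ)) * (∑ j, sg (q.1 j) * (σ i * F i j)))
      = (1 / (n : ℝ)) * ∑ i, ∑ j, sg (q.1 j) * (σ i * F i j) := (Finset.mul_sum _ _ _).symm
  have e4 : (∑ i, ∑ j, sg (q.1 j) * (σ i * F i j))
      = ∑ j, ∑ i, sg (q.1 j) * (σ i * F i j) := Finset.sum_comm
  have e5 : (∑ i, ε * (sg (q.2 i) * σ i)) = ε * ∑ i, sg (q.2 i) * σ i :=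
    (Finset.mul_sum _ _ _).symm
  have e6 : (1 / (n:ℝ)) * (∑ j, ∑ i, sg (q.1 j) * (σ i * F i j)) + dd p n a q
      = (1 / (n : ℝ)) * (∑ j, sg (q.1 j) * ((∑ i, σ i * F i j) + a j)) := by
    simp only [dd]
    rw [← mul_add]
    congr 1
    rw [← Finset.sum_add_distrib]
    apply Finset.sum_congr rfl
    intro j _
    rw [mul_add, Finset.mul_sum]
  have e7 : (∑ i, -(b i * σ i)) = -(∑ i, b i * σ i) := by
    rw [Finset.sum_neg_distrib]
  have e4' : (1 / (n:ℝ)) * (∑ i, ∑ j, sg (q.1 j) * (σ i * F i j))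
      = (1 / (n:ℝ)) * ∑ j, ∑ i, sg (q.1 j) * (σ i * F i j) := by rw [e4]
  linarith [e1, e2, e3, e4', e5, e6, e7]

lemma univ_ne (p n : ℕ) : (Finset.univ : Finset ((Fin n → Bool) × (Fin p → Bool))).Nonempty :=
  Finset.univ_nonempty

lemma supform_eq (p n : ℕ) (F : Fin p → Fin n → ℝ) (b : Fin p → ℝ) (a : Fin n → ℝ) (ε : ℝ)
    (hε : 0 ≤ ε) (σ : Fin p → ℝ) :
    (Finset.univ.sup' (univ_ne p n) fun q => (∑ i, cc p n F b ε q i * σ i) + dd p n a q)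
      = gExpr p n F b a ε σ := by
  have hn0 : (0:ℝ) ≤ 1 / (n : ℝ) := by positivity
  apply le_antisymm
  · apply Finset.sup'_le
    intro q _
    rw [ellEq]
    unfold gExpr
    have h1 : (∑ j, sg (q.1 j) * ((∑ i, σ i * F i j) + a j)) ≤ ∑ j, |(∑ i, σ i * F i j) + a j| :=
      Finset.sum_le_sum (fun j _ => sg_mul_le _ _)
    have h2 : (∑ i, sg (q.2 i) * σ i) ≤ ∑ i, |σ i| :=
      Finset.sum_le_sum (fun i _ => sg_mul_le _ _)
    have h3 := mul_le_mul_of_nonneg_left h1 hn0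
    have h4 := mul_le_mul_of_nonneg_left h2 hε
    linarith
  · set q0 : (Fin n → Bool) × (Fin p → Bool) :=
      (fun j => decide (0 ≤ (∑ i, σ i * F i j) + a j), fun i => decide (0 ≤ σ i)) with hq0
    have heq : (∑ i, cc p n F b ε q0 i * σ i) + dd p n a q0 = gExpr p n F b a ε σ := by
      rw [ellEq]
      unfold gExpr
      have h1 : (∑ j, sg (q0.1 j) * ((∑ i, σ i * F i j) + a j))
          = ∑ j, |(∑ i, σ i * F i j) + a j| :=
        Finset.sum_congr rfl (fun j _ => sg_decide _)
      have h2 : (∑ i, sg (q0.2 i) * σ i) = ∑ i, |σ i| :=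
        Finset.sum_congr rfl (fun i _ => sg_decide _)
      rw [h1, h2]
    rw [← heq]
    exact Finset.le_sup' (fun q => (∑ i, cc p n F b ε q i * σ i) + dd p n a q)
      (Finset.mem_univ q0)

lemma weakdual (p n : ℕ) (F : Fin p → Fin n → ℝ) (b : Fin p → ℝ) (a : Fin n → ℝ) (ε : ℝ)
    (hε : 0 ≤ ε) (z : Fin n → ℝ) (hz : z ∈ ZeSet p n F b ε) (σ : Fin p → ℝ) :
    (1 / (n : ℝ)) * ∑ j, z j * a j ≤ gExpr p n F b a ε σ := by
  obtain ⟨hbox, hfeas⟩ := hz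
  have hn0 : (0:ℝ) ≤ 1 / (n : ℝ) := by positivity
  have i1 : ∀ j, z j * ((∑ i, σ i * F i j) + a j)
      = (∑ i, σ i * F i j * z j) + z j * a j := by
    intro j
    rw [mul_add, Finset.mul_sum]
    congr 1
    exact Finset.sum_congr rfl (fun i _ => by ring)
  have j0 : ∑ j, z j * ((∑ i, σ i * F i j) + a j)
      = (∑ j, ∑ i, σ i * F i j * z j) + ∑ j, z j * a j := by
    rw [Finset.sum_congr rfl (fun j _ => i1 j), Finset.sum_add_distrib]
  have j2 : (∑ j, ∑ i, σ i * F i j * z j) = ∑ i, ∑ j, σ i * F i j * z j := Finset.sum_comm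
  have j3 : ∀ i : Fin p, (∑ j, σ i * F i j * z j) = σ i * ∑ j, F i j * z j := by
    intro i
    rw [Finset.mul_sum]
    exact Finset.sum_congr rfl (fun j _ => by ring)
  have j5 : (1 / (n:ℝ)) * (∑ j, ∑ i, σ i * F i j * z j)
      = ∑ i, σ i * ((1 / (n:ℝ)) * (∑ j, F i j * z j)) := by
    rw [j2, Finset.sum_congr rfl (fun i _ => j3 i), Finset.mul_sum]
    exact Finset.sum_congr rfl (fun i _ => by ring)
  have identity : (1 / (n:ℝ)) * ∑ j, z j * ((∑ i, σ i * F i j) + a j)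
      = (∑ i, σ i * ((1 / (n:ℝ)) * (∑ j, F i j * z j))) + (1 / (n:ℝ)) * ∑ j, z j * a j := by
    rw [j0, mul_add, j5]
  have habs : ∀ j, z j * ((∑ i, σ i * F i j) + a j) ≤ |(∑ i, σ i * F i j) + a j| := by
    intro j
    have h1 : |z j| ≤ 1 := abs_le.2 ⟨(hbox j).1, (hbox j).2⟩
    calc z j * ((∑ i, σ i * F i j) + a j) ≤ |z j * ((∑ i, σ i * F i j) + a j)| :=
          le_abs_self _
      _ = |z j| * |(∑ i, σ i * F i j) + a j| := abs_mul _ _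
      _ ≤ 1 * |(∑ i, σ i * F i j) + a j| :=
          mul_le_mul_of_nonneg_right h1 (abs_nonneg _)
      _ = |(∑ i, σ i * F i j) + a j| := one_mul _
  have h2 : (1 / (n:ℝ)) * (∑ j, z j * ((∑ i, σ i * F i j) + a j))
      ≤ (1 / (n:ℝ)) * ∑ j, |(∑ i, σ i * F i j) + a j| :=
    mul_le_mul_of_nonneg_left (Finset.sum_le_sum (fun j _ => habs j)) hn0
  have split : (∑ i, σ i * ((1 / (n:ℝ)) * (∑ j, F i j * z j))) - (∑ i, b i * σ i)
      = ∑ i, σ i * ((1 / (n:ℝ)) * (∑ j, F i j * z j) - b i) := by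
    rw [← Finset.sum_sub_distrib]
    exact Finset.sum_congr rfl (fun i _ => by ring)
  have nonneg : ∀ i : Fin p, 0 ≤ σ i * ((1 / (n:ℝ)) * (∑ j, F i j * z j) - b i) + ε * |σ i| := by
    intro i
    have hub : |σ i * ((1 / (n:ℝ)) * (∑ j, F i j * z j) - b i)| ≤ ε * |σ i| := by
      rw [abs_mul]
      calc |σ i| * |(1 / (n:ℝ)) * (∑ j, F i j * z j) - b i| ≤ |σ i| * ε :=
            mul_le_mul_of_nonneg_left (hfeas i) (abs_nonneg _)
        _ = ε * |σ i| := mul_comm _ _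
    linarith [neg_abs_le (σ i * ((1 / (n:ℝ)) * (∑ j, F i j * z j) - b i))]
  have sumnonneg : 0 ≤ ∑ i, (σ i * ((1 / (n:ℝ)) * (∑ j, F i j * z j) - b i) + ε * |σ i|) :=
    Finset.sum_nonneg (fun i _ => nonneg i)
  have esplit : ∑ i, (σ i * ((1 / (n:ℝ)) * (∑ j, F i j * z j) - b i) + ε * |σ i|)
      = (∑ i, σ i * ((1 / (n:ℝ)) * (∑ j, F i j * z j) - b i)) + ε * ∑ i, |σ i| := by
    rw [Finset.sum_add_distrib, Finset.mul_sum]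
  unfold gExpr
  linarith [identity, h2, split, sumnonneg, esplit]

theorem stmt_6 (p n : ℕ) (hp : 0 < p) (hn : 0 < n)
    (F : Fin p → Fin n → ℝ) (b : Fin p → ℝ) (a : Fin n → ℝ) (ε : ℝ) (hε : 0 ≤ ε)
    (hZ : (ZeSet p n F b ε).Nonempty) :
    ∃ z ∈ ZeSet p n F b ε, ∃ σ : Fin p → ℝ,
      (∀ z' ∈ ZeSet p n F b ε,
        (1 / (n : ℝ)) * ∑ j, z' j * a j ≤ (1 / (n : ℝ)) * ∑ j, z j * a j) ∧
      (∀ σ' : Fin p → ℝ,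
        -(∑ i, b i * σ i) + (1 / (n : ℝ)) * (∑ j, |(∑ i, σ i * F i j) + a j|) + ε * ∑ i, |σ i| ≤
          -(∑ i, b i * σ' i) + (1 / (n : ℝ)) * (∑ j, |(∑ i, σ' i * F i j) + a j|) + ε * ∑ i, |σ' i|) ∧
      (1 / (n : ℝ)) * ∑ j, z j * a j =
        -(∑ i, b i * σ i) + (1 / (n : ℝ)) * (∑ j, |(∑ i, σ i * F i j) + a j|) + ε * ∑ i, |σ i| := by
  classical
  obtain ⟨z0, hz0⟩ := hZ
  have hm : ∀ σ : Fin p → ℝ, (1/(n:ℝ)) * ∑ j, z0 j * a j ≤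
      Finset.univ.sup' (univ_ne p n) (fun q => (∑ i, cc p n F b ε q i * σ i) + dd p n a q) := by
    intro σ
    rw [supform_eq p n F b a ε hε σ]
    exact weakdual p n F b a ε hε z0 hz0 σ
  obtain ⟨σ0, hσ0⟩ := polymin p Finset.univ (univ_ne p n) (cc p n F b ε) (dd p n a) _ hm
  set W : ℝ := Finset.univ.sup' (univ_ne p n)
    (fun q => (∑ i, cc p n F b ε q i * σ0 i) + dd p n a q) with hW
  set T : Finset ((Fin n → Bool) × (Fin p → Bool)) :=
    Finset.univ.filter (fun q => (∑ i, cc p n F b ε q i * σ0 i) + dd p n a q = W) with hT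
  -- 0 is in the convex hull of gradients of active pieces
  have hconv : (0 : Fin p → ℝ) ∈ convexHull ℝ ((fun q => cc p n F b ε q) '' (T : Set _)) := by
    by_contra hns
    have hfin : ((fun q => cc p n F b ε q) '' (T : Set _)).Finite :=
      T.finite_toSet.image _
    obtain ⟨f, u, hfu, hK⟩ := geometric_hahn_banach_point_closed
      (convex_convexHull ℝ _) (hfin.isCompact_convexHull (𝕜 := ℝ)).isClosed hns
    have hu0 : 0 < u := by simpa using hfu
    set y : Fin p → ℝ := fun i => f (fun j => if i = j then 1 else 0) with hy
    have frepr : ∀ v : Fin p → ℝ, f v = ∑ i, v i * y i := by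
      intro v
      have h1 := LinearMap.pi_apply_eq_sum_univ (f : (Fin p → ℝ) →ₗ[ℝ] ℝ) v
      simpa [smul_eq_mul] using h1
    have hKT : ∀ q ∈ T, u < f (cc p n F b ε q) := by
      intro q hq
      exact hK _ (subset_convexHull ℝ _ (Set.mem_image_of_mem _ (Finset.mem_coe.2 hq)))
    set t : ℝ := Finset.univ.inf' (univ_ne p n)
      (fun q => if q ∈ T then 1
        else (W - ((∑ i, cc p n F b ε q i * σ0 i) + dd p n a q)) / (|f (cc p n F b ε q)| + 1))
      with htdef
    have hgap : ∀ q, q ∉ T → (∑ i, cc p n F b ε q i * σ0 i) + dd p n a q < W := by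
      intro q hq
      rcases lt_or_eq_of_le (Finset.le_sup'
        (fun q => (∑ i, cc p n F b ε q i * σ0 i) + dd p n a q) (Finset.mem_univ q)) with h | h
      · exact h
      · exact absurd (Finset.mem_filter.2 ⟨Finset.mem_univ q, h⟩) hq
    have htpos : 0 < t := by
      rw [htdef, Finset.lt_inf'_iff]
      intro q _
      by_cases hq : q ∈ T
      · rw [if_pos hq]; norm_num
      · rw [if_neg hq]
        apply div_pos
        · linarith [hgap q hq]
        · positivity
    have hlin : ∀ q, (∑ i, cc p n F b ε q i * (σ0 - t • y) i) + dd p n a q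
        = ((∑ i, cc p n F b ε q i * σ0 i) + dd p n a q) - t * f (cc p n F b ε q) := by
      intro q
      have e : ∀ i, cc p n F b ε q i * (σ0 - t • y) i
          = cc p n F b ε q i * σ0 i - t * (cc p n F b ε q i * y i) := by
        intro i
        simp only [Pi.sub_apply, Pi.smul_apply, smul_eq_mul]
        ring
      rw [frepr (cc p n F b ε q), Finset.sum_congr rfl (fun i _ => e i),
        Finset.sum_sub_distrib, ← Finset.mul_sum]
      ring
    have hdesc : (Finset.univ.sup' (univ_ne p n)
        (fun q => (∑ i, cc p n F b ε q i * (σ0 - t • y) i) + dd p n a q)) < W := by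
      rw [Finset.sup'_lt_iff]
      intro q _
      rw [hlin q]
      by_cases hq : q ∈ T
      · have h1 : (∑ i, cc p n F b ε q i * σ0 i) + dd p n a q = W := (Finset.mem_filter.1 hq).2
        have h2 := hKT q hq
        nlinarith
      · have h1 := hgap q hq
        have h2 : t ≤ (W - ((∑ i, cc p n F b ε q i * σ0 i) + dd p n a q))
            / (|f (cc p n F b ε q)| + 1) := by
          have h3 := Finset.inf'_le (fun q => if q ∈ T then 1
            else (W - ((∑ i, cc p n F b ε q i * σ0 i) + dd p n a q)) / (|f (cc p n F b ε q)| + 1))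
            (Finset.mem_univ q)
          rw [if_neg hq] at h3
          exact le_trans (le_of_eq htdef) h3
        have h4 : t * (|f (cc p n F b ε q)| + 1)
            ≤ W - ((∑ i, cc p n F b ε q i * σ0 i) + dd p n a q) := by
          exact (le_div_iff₀ (by positivity : (0:ℝ) < |f (cc p n F b ε q)| + 1)).1 h2
        have h5 : - t * f (cc p n F b ε q) ≤ t * |f (cc p n F b ε q)| := by
          have := neg_abs_le (f (cc p n F b ε q))
          nlinarith [abs_nonneg (f (cc p n F b ε q))]
        nlinarith
    exact absurd (hσ0 (σ0 - t • y)) (not_le.2 hdesc)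
  -- extract convex weights
  rw [_root_.convexHull_eq] at hconv
  obtain ⟨ι', tt, wt, zt, hw0, hw1, hzmem, hcm⟩ := hconv
  rw [Finset.centerMass_eq_of_sum_1 _ _ hw1] at hcm
  have hch : ∀ i : ι', ∃ q : (Fin n → Bool) × (Fin p → Bool),
      i ∈ tt → (q ∈ T ∧ cc p n F b ε q = zt i) := by
    intro i
    by_cases hi : i ∈ tt
    · obtain ⟨q, hqT, hqe⟩ := hzmem i hi
      exact ⟨q, fun _ => ⟨Finset.mem_coe.1 hqT, hqe⟩⟩
    · exact ⟨(fun _ => true, fun _ => true), fun h => absurd h hi⟩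
  choose ψ hψ using hch
  set zvec : Fin n → ℝ := fun j => ∑ i ∈ tt, wt i * sg ((ψ i).1 j) with hzvec
  set svec : Fin p → ℝ := fun k => ∑ i ∈ tt, wt i * sg ((ψ i).2 k) with hsvec
  have hz1 : ∀ j, |zvec j| ≤ 1 := by
    intro j
    calc |∑ i ∈ tt, wt i * sg ((ψ i).1 j)| ≤ ∑ i ∈ tt, |wt i * sg ((ψ i).1 j)| :=
          Finset.abs_sum_le_sum_abs _ _
      _ = ∑ i ∈ tt, wt i := Finset.sum_congr rfl (fun i hi => by
          rw [abs_mul, sg_abs, mul_one, abs_of_nonneg (hw0 i hi)])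
      _ = 1 := hw1
  have hs1 : ∀ k, |svec k| ≤ 1 := by
    intro k
    calc |∑ i ∈ tt, wt i * sg ((ψ i).2 k)| ≤ ∑ i ∈ tt, |wt i * sg ((ψ i).2 k)| :=
          Finset.abs_sum_le_sum_abs _ _
      _ = ∑ i ∈ tt, wt i := Finset.sum_congr rfl (fun i hi => by
          rw [abs_mul, sg_abs, mul_one, abs_of_nonneg (hw0 i hi)])
      _ = 1 := hw1
  have hzero : ∀ k : Fin p, (∑ i ∈ tt, wt i * cc p n F b ε (ψ i) k) = 0 := by
    intro k
    have h0 := congrFun hcm k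
    rw [Finset.sum_apply] at h0
    have h1 : ∀ i ∈ tt, (wt i • zt i) k = wt i * cc p n F b ε (ψ i) k := by
      intro i hi
      rw [Pi.smul_apply, smul_eq_mul, ← (hψ i hi).2]
    rw [Finset.sum_congr rfl h1] at h0
    simpa using h0
  -- expansion of the weighted gradient sum
  have hexp : ∀ k : Fin p, ∀ i ∈ tt, wt i * cc p n F b ε (ψ i) k
      = -(wt i * b k) + (1/(n:ℝ)) * (∑ j, F k j * (wt i * sg ((ψ i).1 j)))
        + ε * (wt i * sg ((ψ i).2 k)) := by
    intro k i _
    have e : (∑ j, F k j * (wt i * sg ((ψ i).1 j)))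
        = wt i * (∑ j, sg ((ψ i).1 j) * F k j) := by
      rw [Finset.mul_sum]
      exact Finset.sum_congr rfl (fun j _ => by ring)
    rw [e]
    simp only [cc]
    ring
  have hkey : ∀ k : Fin p, (1/(n:ℝ)) * (∑ j, F k j * zvec j) - b k = -(ε * svec k) := by
    intro k
    have h0 := hzero k
    rw [Finset.sum_congr rfl (hexp k), Finset.sum_add_distrib, Finset.sum_add_distrib] at h0
    have p1 : (∑ i ∈ tt, -(wt i * b k)) = -(b k) := by
      rw [Finset.sum_neg_distrib, ← Finset.sum_mul, hw1, one_mul]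
    have p2 : (∑ i ∈ tt, (1/(n:ℝ)) * (∑ j, F k j * (wt i * sg ((ψ i).1 j))))
        = (1/(n:ℝ)) * (∑ j, F k j * zvec j) := by
      rw [← Finset.mul_sum]
      congr 1
      rw [Finset.sum_comm]
      apply Finset.sum_congr rfl
      intro j _
      rw [hzvec]
      simp only []
      rw [Finset.mul_sum]
    have p3 : (∑ i ∈ tt, ε * (wt i * sg ((ψ i).2 k))) = ε * svec k := by
      rw [← Finset.mul_sum]
    rw [p1, p2, p3] at h0
    linarith
  have hfeasz : ∀ k, |(1/(n:ℝ)) * (∑ j, F k j * zvec j) - b k| ≤ ε := by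
    intro k
    rw [hkey k, abs_neg, abs_mul, abs_of_nonneg hε]
    calc ε * |svec k| ≤ ε * 1 := mul_le_mul_of_nonneg_left (hs1 k) hε
      _ = ε := mul_one ε
  -- value identity
  have hval : (1/(n:ℝ)) * ∑ j, zvec j * a j = W := by
    have hTmem : ∀ i ∈ tt, (∑ k, cc p n F b ε (ψ i) k * σ0 k) + dd p n a (ψ i) = W := by
      intro i hi
      exact (Finset.mem_filter.1 (hψ i hi).1).2
    have h1 : ∑ i ∈ tt, wt i * ((∑ k, cc p n F b ε (ψ i) k * σ0 k) + dd p n a (ψ i)) = W := by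
      rw [Finset.sum_congr rfl (fun i hi => by rw [hTmem i hi]), ← Finset.sum_mul, hw1, one_mul]
    have h2 : ∑ i ∈ tt, wt i * ((∑ k, cc p n F b ε (ψ i) k * σ0 k) + dd p n a (ψ i))
        = (∑ k, σ0 k * (∑ i ∈ tt, wt i * cc p n F b ε (ψ i) k))
          + (1/(n:ℝ)) * ∑ j, zvec j * a j := by
      have e1 : ∀ i ∈ tt, wt i * ((∑ k, cc p n F b ε (ψ i) k * σ0 k) + dd p n a (ψ i))
          = (∑ k, σ0 k * (wt i * cc p n F b ε (ψ i) k))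
            + (1/(n:ℝ)) * (∑ j, (wt i * sg ((ψ i).1 j)) * a j) := by
        intro i _
        have e2 : (∑ k, σ0 k * (wt i * cc p n F b ε (ψ i) k))
            = wt i * (∑ k, cc p n F b ε (ψ i) k * σ0 k) := by
          rw [Finset.mul_sum]
          exact Finset.sum_congr rfl (fun k _ => by ring)
        have e3 : (∑ j, (wt i * sg ((ψ i).1 j)) * a j)
            = wt i * (∑ j, sg ((ψ i).1 j) * a j) := by
          rw [Finset.mul_sum]
          exact Finset.sum_congr rfl (fun j _ => by ring)
        rw [e2, e3]
        simp only [dd]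
        ring
      rw [Finset.sum_congr rfl e1, Finset.sum_add_distrib]
      congr 1
      · rw [Finset.sum_comm]
        apply Finset.sum_congr rfl
        intro k _
        rw [Finset.mul_sum]
      · rw [← Finset.mul_sum]
        congr 1
        rw [Finset.sum_comm]
        apply Finset.sum_congr rfl
        intro j _
        rw [hzvec]
        simp only []
        rw [Finset.sum_mul]
    have h3 : (∑ k, σ0 k * (∑ i ∈ tt, wt i * cc p n F b ε (ψ i) k)) = 0 := by
      rw [Finset.sum_congr rfl (fun k _ => by rw [hzero k, mul_zero])]
      exact Finset.sum_const_zero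
    rw [h2, h3, zero_add] at h1
    exact h1
  -- conclusion
  have hWg : W = gExpr p n F b a ε σ0 := supform_eq p n F b a ε hε σ0
  refine ⟨zvec, ⟨fun j => Set.mem_Icc.2 (abs_le.1 (hz1 j)), hfeasz⟩, σ0, ?_, ?_, ?_⟩
  · intro z' hz'
    calc (1 / (n : ℝ)) * ∑ j, z' j * a j ≤ gExpr p n F b a ε σ0 :=
          weakdual p n F b a ε hε z' hz' σ0
      _ = W := hWg.symm
      _ = (1 / (n : ℝ)) * ∑ j, zvec j * a j := hval.symm
  · intro σ'
    have h1 := hσ0 σ'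
    rw [hWg, supform_eq p n F b a ε hε σ'] at h1
    exact h1
  · rw [hval, hWg]
    rfl
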